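/- Let R: L_{2e} → L_{2e} be causal and period preserving with finite incremental gain Γ(R). For any pair of T-periodic inputs u₁, u₂ with T-periodic asymptotic outputs ỹ₁, ỹ₂, the limit as t → ∞ of ‖P_t(Ru₁ − Ru₂)‖/‖P_t(u₁ − u₂)‖ equals ‖ỹ₁ − ỹ₂‖_RMS / ‖u₁ − u₂‖_RMS. -/

import Mathlib

open MeasureTheory Filter

/-- Truncation operator `P_T` on signals over `[0,∞)`. -/
noncomputable def trunc (T : ℝ) (u : ℝ → ℝ) : ℝ → ℝ := fun t => if t ≤ T then u t else 0

/-- The measure of the time axis `[0,∞)`. -/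
noncomputable def timeMeasure : MeasureTheory.Measure ℝ := volume.restrict (Set.Ici 0)

/-- The truncated `L₂`-norm `‖P_t v‖` of a signal. -/
noncomputable def truncNorm (t : ℝ) (v : ℝ → ℝ) : ℝ :=
  (eLpNorm (trunc t v) 2 timeMeasure).toReal

/-- RMS norm of a `T`-periodic signal: `‖v‖_RMS = (1/√T)·‖v‖_{L₂[0,T]}`. -/
noncomputable def rmsNorm (T : ℝ) (v : ℝ → ℝ) : ℝ :=
  (eLpNorm v 2 (volume.restrict (Set.Ioc 0 T))).toReal / Real.sqrt T

open Set
open scoped ENNReal NNReal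
set_option maxHeartbeats 1000000

noncomputable def Jl (f : ℝ → ℝ) (a b : ℝ) : ℝ≥0∞ :=
  ∫⁻ x in Set.Ioc a b, (‖f x‖₊ : ℝ≥0∞) ^ 2

-- translation invariance for arbitrary (possibly non-measurable) f
lemma lintegral_shift (f : ℝ → ℝ≥0∞) (c : ℝ) :
    ∫⁻ x, f x ∂(volume : Measure ℝ) = ∫⁻ x, f (x + c) ∂(volume : Measure ℝ) :=
  ((measurePreserving_add_right (volume : Measure ℝ) c).lintegral_map_equiv f
    (MeasurableEquiv.addRight c))

lemma Jl_shift (f : ℝ → ℝ) (a b c : ℝ) :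
    Jl f a b = ∫⁻ x in Set.Ioc (a - c) (b - c), (‖f (x + c)‖₊ : ℝ≥0∞) ^ 2 := by
  unfold Jl
  rw [← lintegral_indicator measurableSet_Ioc, ← lintegral_indicator measurableSet_Ioc]
  rw [lintegral_shift _ c]
  congr 1
  ext x
  simp only [Set.indicator]
  by_cases h : x ∈ Set.Ioc (a - c) (b - c)
  · have : x + c ∈ Set.Ioc a b := by
      simp only [Set.mem_Ioc] at h ⊢; constructor <;> linarith [h.1, h.2]
    simp [h, this]
  · have : x + c ∉ Set.Ioc a b := by
      simp only [Set.mem_Ioc] at h ⊢; intro h1; by_contra h2; push_neg at h2; exact h ⟨by linarith, by linarith⟩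
    simp [h, this]

lemma Jl_split (f : ℝ → ℝ) {a b c : ℝ} (hab : a ≤ b) (hbc : b ≤ c) :
    Jl f a c = Jl f a b + Jl f b c := by
  unfold Jl
  rw [← Set.Ioc_union_Ioc_eq_Ioc hab hbc,
    Measure.restrict_union (Set.Ioc_disjoint_Ioc_of_le le_rfl) measurableSet_Ioc,
    lintegral_add_measure]

lemma Jl_mono (f : ℝ → ℝ) {a b a' b' : ℝ} (ha : a' ≤ a) (hb : b ≤ b') :
    Jl f a b ≤ Jl f a' b' :=
  lintegral_mono' (Measure.restrict_mono (Set.Ioc_subset_Ioc ha hb) le_rfl) le_rfl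

lemma Jl_neg (f : ℝ → ℝ) {a b : ℝ} (h : b ≤ a) : Jl f a b = 0 := by
  unfold Jl
  rw [Set.Ioc_eq_empty (by exact not_lt.mpr h), Measure.restrict_empty, lintegral_zero_measure]

lemma per_nat {T : ℝ} {g : ℝ → ℝ} (hper : ∀ t, 0 ≤ t → g (t + T) = g t) (hT : 0 < T)
    (k : ℕ) {x : ℝ} (hx : 0 ≤ x) : g (x + k * T) = g x := by
  induction k with
  | zero => simp
  | succ n ih =>
    have : x + (n + 1 : ℕ) * T = (x + n * T) + T := by push_cast; ring
    rw [this, hper _ (by positivity), ih]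

lemma Jl_block {T : ℝ} {g : ℝ → ℝ} (hper : ∀ t, 0 ≤ t → g (t + T) = g t) (hT : 0 < T) (k : ℕ) :
    Jl g (k * T) (k * T + T) = Jl g 0 T := by
  rw [Jl_shift g _ _ (k * T)]
  have h1 : (k : ℝ) * T - k * T = 0 := by ring
  have h2 : (k : ℝ) * T + T - k * T = T := by ring
  rw [h1, h2]
  unfold Jl
  rw [← lintegral_indicator measurableSet_Ioc, ← lintegral_indicator measurableSet_Ioc]
  congr 1
  ext x
  by_cases h : x ∈ Set.Ioc (0:ℝ) T
  · have hx : (0:ℝ) ≤ x := le_of_lt h.1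
    simp [Set.indicator, h, per_nat hper hT k hx]
  · simp [Set.indicator, h]

lemma Jl_multiple {T : ℝ} {g : ℝ → ℝ} (hper : ∀ t, 0 ≤ t → g (t + T) = g t) (hT : 0 < T) (n : ℕ) :
    Jl g 0 (n * T) = n * Jl g 0 T := by
  induction n with
  | zero => simp [Jl]
  | succ n ih =>
    have h1 : (0:ℝ) ≤ n * T := by positivity
    have h2 : (n:ℝ) * T ≤ (n + 1 : ℕ) * T := by push_cast; nlinarith
    rw [Jl_split g h1 h2, ih]
    have : ((n:ℕ) + 1 : ℕ) * (T:ℝ) = n * T + T := by push_cast; ring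
    rw [this, Jl_block hper hT n]
    push_cast
    ring

lemma eLpNorm_two_eq (f : ℝ → ℝ) (μ : Measure ℝ) :
    eLpNorm f 2 μ = (∫⁻ x, (‖f x‖₊ : ℝ≥0∞) ^ 2 ∂μ) ^ (1/2 : ℝ) := by
  rw [eLpNorm_eq_lintegral_rpow_enorm_toReal (by norm_num) (by norm_num)]
  norm_num [enorm_eq_nnnorm]


lemma sq_eLpNorm (h : ℝ → ℝ) (μ : Measure ℝ) :
    ∫⁻ x, (‖h x‖₊ : ℝ≥0∞) ^ 2 ∂μ = (eLpNorm h 2 μ) ^ 2 := by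
  rw [eLpNorm_two_eq, ← ENNReal.rpow_natCast _ 2, ← ENNReal.rpow_mul]
  norm_num

lemma eLpNorm_rms (f : ℝ → ℝ) (T : ℝ) :
    eLpNorm f 2 (volume.restrict (Set.Ioc 0 T)) = (Jl f 0 T) ^ (1/2 : ℝ) := by
  rw [eLpNorm_two_eq]; rfl

lemma rmsNorm_eq (f : ℝ → ℝ) (T : ℝ) :
    rmsNorm T f = Real.sqrt (Jl f 0 T).toReal / Real.sqrt T := by
  rw [rmsNorm, eLpNorm_rms]
  congr 1
  rw [← ENNReal.toReal_rpow, Real.sqrt_eq_rpow]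

-- truncated norm in terms of Jl
lemma trunc_lintegral (v : ℝ → ℝ) {t : ℝ} (ht : 0 ≤ t) :
    ∫⁻ x, (‖trunc t v x‖₊ : ℝ≥0∞) ^ 2 ∂timeMeasure = Jl v 0 t := by
  have h1 : ∀ x, (‖trunc t v x‖₊ : ℝ≥0∞) ^ 2
      = (Set.Iic t).indicator (fun x => (‖v x‖₊ : ℝ≥0∞) ^ 2) x := by
    intro x
    simp only [trunc, Set.indicator, Set.mem_Iic]
    by_cases h : x ≤ t <;> simp [h]
  simp_rw [h1]
  rw [timeMeasure, lintegral_indicator measurableSet_Iic,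
    Measure.restrict_restrict measurableSet_Iic]
  have h2 : Set.Iic t ∩ Set.Ici 0 = Set.Icc 0 t := by
    ext x; simp [Set.mem_Icc, and_comm]
  rw [h2, ← Measure.restrict_congr_set Ioc_ae_eq_Icc]
  rfl

lemma truncNorm_eq (v : ℝ → ℝ) {t : ℝ} (ht : 0 ≤ t) :
    truncNorm t v = Real.sqrt (Jl v 0 t).toReal := by
  rw [truncNorm, eLpNorm_two_eq, trunc_lintegral v ht, ← ENNReal.toReal_rpow,
    Real.sqrt_eq_rpow]

lemma enn_sq (a : ℝ) : (‖a‖₊ : ℝ≥0∞) ^ 2 = ENNReal.ofReal (|a| ^ 2) := by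
  rw [ENNReal.ofReal_pow (abs_nonneg a), ← Real.enorm_eq_ofReal_abs]; rfl

lemma pointwise_sq {a b ε : ℝ} (hε : 0 < ε) (h : |a| ≤ |b| + ε) :
    (‖a‖₊ : ℝ≥0∞) ^ 2
      ≤ (1 + ENNReal.ofReal ε) * (‖b‖₊ : ℝ≥0∞) ^ 2 + ENNReal.ofReal (ε + ε ^ 2) := by
  rw [enn_sq, enn_sq]
  have h1 : (1 : ℝ≥0∞) + ENNReal.ofReal ε = ENNReal.ofReal (1 + ε) := by
    rw [ENNReal.ofReal_add zero_le_one hε.le, ENNReal.ofReal_one]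
  rw [h1, ← ENNReal.ofReal_mul (by positivity), ← ENNReal.ofReal_add (by positivity) (by positivity)]
  apply ENNReal.ofReal_le_ofReal
  have h2 : |a| ^ 2 ≤ (|b| + ε) ^ 2 := by
    apply pow_le_pow_left₀ (abs_nonneg a) h
  nlinarith [sq_nonneg (|b| - 1), abs_nonneg b]

lemma Jl_approx {f g : ℝ → ℝ} {s t ε : ℝ} (hε : 0 < ε)
    (h : ∀ x ∈ Set.Ioc s t, |f x| ≤ |g x| + ε) :
    Jl f s t ≤ (1 + ENNReal.ofReal ε) * Jl g s t
      + ENNReal.ofReal (ε + ε ^ 2) * ENNReal.ofReal (t - s) := by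
  have step1 : Jl f s t ≤ ∫⁻ x in Set.Ioc s t,
      ((1 + ENNReal.ofReal ε) * (‖g x‖₊ : ℝ≥0∞) ^ 2 + ENNReal.ofReal (ε + ε ^ 2)) := by
    unfold Jl
    rw [← lintegral_indicator measurableSet_Ioc, ← lintegral_indicator measurableSet_Ioc]
    apply lintegral_mono
    intro x
    by_cases hx : x ∈ Set.Ioc s t
    · simp only [Set.indicator_of_mem hx]
      exact pointwise_sq hε (h x hx)
    · simp [Set.indicator_of_notMem hx]
  have step2 : ∫⁻ x in Set.Ioc s t,
      ((1 + ENNReal.ofReal ε) * (‖g x‖₊ : ℝ≥0∞) ^ 2 + ENNReal.ofReal (ε + ε ^ 2))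
      = (1 + ENNReal.ofReal ε) * Jl g s t
        + ENNReal.ofReal (ε + ε ^ 2) * ENNReal.ofReal (t - s) := by
    rw [lintegral_add_right _ measurable_const,
      lintegral_const_mul' _ _ (by finiteness), lintegral_const,
      Measure.restrict_apply_univ, Real.volume_Ioc]
    rfl
  exact step1.trans (le_of_eq step2)

lemma key_lower {β ε t W G T nR mR : ℝ} (hT : 0 < T) (htpos : 0 < t)
    (hε : 0 < ε) (hε1 : ε ≤ 1) (hβ0 : 0 ≤ β) (hW0 : 0 ≤ W) (hG0 : 0 ≤ G)
    (hGeq : nR * (β * T) = mR * (β * T) + G)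
    (hLower : G ≤ (1 + ε) * W + (ε + ε ^ 2) * t)
    (hnTl : t - ε * t ≤ nR * T) (hmTl : mR * T ≤ ε * t) :
    (β - (3 * β + 3) * ε) * t ≤ W := by
  have h1 : (1 - ε) * (β * t) ≤ nR * T * β :=  by
    nlinarith [mul_le_mul_of_nonneg_right hnTl hβ0]
  have h2 : mR * T * β ≤ ε * (β * t) := by
    nlinarith [mul_le_mul_of_nonneg_right hmTl hβ0]
  have hGlow : (1 - ε) * (β * t) - ε * (β * t) ≤ G := by nlinarith
  nlinarith [mul_nonneg (mul_nonneg hε.le hβ0) htpos.le,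
    mul_pos hε htpos, mul_nonneg hβ0 htpos.le,
    mul_nonneg (mul_nonneg hε.le hε.le) htpos.le,
    mul_nonneg (mul_nonneg hε.le hε.le) (mul_nonneg hβ0 htpos.le)]

lemma key_upper {β ε t W C T nR : ℝ} (hT : 0 < T) (htpos : 0 < t)
    (hε : 0 < ε) (hε1 : ε ≤ 1) (hβ0 : 0 ≤ β) (hW0 : 0 ≤ W)
    (hUpper : W ≤ C + (1 + ε) * ((nR + 1) * (β * T)) + (ε + ε ^ 2) * t)
    (hCε : C ≤ ε * t) (h4 : (nR + 1) * T ≤ t + ε * t) (hnR : 0 ≤ nR) :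
    W ≤ (β + (3 * β + 3) * ε) * t := by
  have h5 : (1 + ε) * ((nR + 1) * (β * T)) ≤ (1 + ε) * ((1 + ε) * t * β) := by
    have := mul_le_mul_of_nonneg_right h4 hβ0
    nlinarith
  nlinarith [mul_nonneg (mul_nonneg hε.le hβ0) htpos.le,
    mul_nonneg (mul_nonneg (mul_nonneg hε.le hε.le) hβ0) htpos.le,
    mul_nonneg (mul_nonneg hε.le hε.le) htpos.le]

lemma rate {T : ℝ} (hT : 0 < T) (f g : ℝ → ℝ)
    (hper : ∀ t, 0 ≤ t → g (t + T) = g t)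
    (happ : ∀ ε > (0:ℝ), ∃ t₀ : ℝ, 0 ≤ t₀ ∧ ∀ τ ≥ t₀, |f τ - g τ| < ε)
    (hloc : ∀ t, Jl f 0 t ≠ ⊤) :
    Jl g 0 T ≠ ⊤ ∧
      Tendsto (fun t => (Jl f 0 t).toReal / t) atTop
        (nhds ((Jl g 0 T).toReal / T)) := by
  -- B is finite
  have hBtop : Jl g 0 T ≠ ⊤ := by
    obtain ⟨t₀, ht₀0, h1⟩ := happ 1 one_pos
    set k := ⌈t₀ / T⌉₊ with hk
    have hkT : t₀ ≤ k * T := by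
      rw [← div_le_iff₀ hT]; exact Nat.le_ceil _
    have hb := Jl_block hper hT k
    have happ1 : ∀ x ∈ Set.Ioc ((k:ℝ) * T) ((k:ℝ) * T + T), |g x| ≤ |f x| + 1 := by
      intro x hx
      have hx0 : t₀ ≤ x := le_trans hkT (le_of_lt hx.1)
      have := h1 x hx0
      have : |g x - f x| < 1 := by rw [abs_sub_comm]; exact this
      calc |g x| = |f x + (g x - f x)| := by ring_nf
        _ ≤ |f x| + |g x - f x| := abs_add_le _ _
        _ ≤ |f x| + 1 := by linarith
    have hle := Jl_approx one_pos happ1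
    rw [hb] at hle
    intro hcon
    rw [hcon] at hle
    have hfin : (1 + ENNReal.ofReal 1) * Jl f ((k:ℝ) * T) ((k:ℝ) * T + T)
        + ENNReal.ofReal (1 + 1 ^ 2) * ENNReal.ofReal ((k:ℝ) * T + T - (k:ℝ) * T) ≠ ⊤ := by
      apply ENNReal.add_ne_top.mpr
      constructor
      · apply ENNReal.mul_ne_top (by finiteness)
        exact ne_top_of_le_ne_top (hloc ((k:ℝ) * T + T))
          (Jl_mono f (by positivity) le_rfl)
      · finiteness
    exact hfin (top_le_iff.mp hle)
  refine ⟨hBtop, ?_⟩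
  set B' := (Jl g 0 T).toReal with hB'def
  have hB'0 : 0 ≤ B' := ENNReal.toReal_nonneg
  set β := B' / T with hβdef
  have hβ0 : 0 ≤ β := by positivity
  have hB'β : B' = β * T := by rw [hβdef]; field_simp
  set κ := 3 * β + 3 with hκdef
  have hκ0 : 0 < κ := by positivity
  rw [Metric.tendsto_atTop]
  intro ε' hε'
  set ε := min 1 (ε' / (2 * κ)) with hεdef
  have hε : 0 < ε := lt_min one_pos (by positivity)
  have hε1 : ε ≤ 1 := min_le_left _ _
  have hεκ : κ * ε < ε' := by
    have h2 : ε ≤ ε' / (2 * κ) := min_le_right _ _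
    have : κ * ε ≤ κ * (ε' / (2 * κ)) := by nlinarith
    have heq : κ * (ε' / (2 * κ)) = ε' / 2 := by field_simp
    nlinarith
  obtain ⟨t₀, ht₀0, happx⟩ := happ ε hε
  set m := ⌈t₀ / T⌉₊ with hm
  set s := (m : ℝ) * T with hs
  have hst₀ : t₀ ≤ s := by rw [hs, ← div_le_iff₀ hT]; exact Nat.le_ceil _
  have hs0 : 0 ≤ s := le_trans ht₀0 hst₀
  set C := (Jl f 0 s).toReal with hC
  refine ⟨max (max (T * (((m:ℝ) + 2) / ε)) (C / ε + T / ε + 1)) (s + T), fun t ht => ?_⟩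
  -- basic facts about t
  have ht3 : s + T ≤ t := le_trans (le_max_right _ _) ht
  have ht1 : T * (((m:ℝ) + 2) / ε) ≤ t := le_trans (le_trans (le_max_left _ _) (le_max_left _ _)) ht
  have ht2 : C / ε + T / ε + 1 ≤ t := le_trans (le_trans (le_max_right _ _) (le_max_left _ _)) ht
  have htpos : 0 < t := by nlinarith
  have hst : s ≤ t := by nlinarith
  have hC0 : 0 ≤ C := by rw [hC]; exact ENNReal.toReal_nonneg
  have hCε : C ≤ ε * t := by
    have : C / ε ≤ t := by nlinarith [div_nonneg hT.le hε.le]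
    calc C = ε * (C / ε) := by field_simp
      _ ≤ ε * t := by nlinarith
  have hTε : T ≤ ε * t := by
    have : T / ε ≤ t := by nlinarith [div_nonneg hC0 hε.le]
    calc T = ε * (T / ε) := by field_simp
      _ ≤ ε * t := by nlinarith
  set n := ⌊t / T⌋₊ with hn
  have hn1 : (n : ℝ) * T ≤ t := by
    have h := Nat.floor_le (show (0:ℝ) ≤ t / T by positivity)
    rw [hn]
    exact (le_div_iff₀ hT).mp h
  have hn2 : t < ((n : ℝ) + 1) * T := by
    have h := Nat.lt_floor_add_one (t / T)
    rw [hn]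
    exact (div_lt_iff₀ hT).mp h
  have hmn : m + 1 ≤ n := by
    rw [hn]
    apply Nat.le_floor
    push_cast
    rw [le_div_iff₀ hT]
    calc ((m:ℝ) + 1) * T = s + T := by rw [hs]; ring
      _ ≤ t := ht3
  have hεn : (m : ℝ) + 1 < ε * n := by
    have h1 : ((m:ℝ) + 2) / ε ≤ t / T := by rw [le_div_iff₀ hT]; nlinarith
    have h2 : t / T < (n:ℝ) + 1 := by rw [div_lt_iff₀ hT]; nlinarith
    have h3 : (m:ℝ) + 2 < ε * ((n:ℝ) + 1) := by
      have := lt_of_le_of_lt h1 h2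
      calc (m:ℝ) + 2 = ε * (((m:ℝ) + 2) / ε) := by field_simp
        _ < ε * ((n:ℝ) + 1) := by nlinarith
    nlinarith
  -- approximation on (s, t]
  have happIoc : ∀ x ∈ Set.Ioc s t, |f x - g x| < ε := fun x hx =>
    happx x (le_trans hst₀ (le_of_lt hx.1))
  have happF : ∀ x ∈ Set.Ioc s t, |f x| ≤ |g x| + ε := by
    intro x hx
    have := happIoc x hx
    calc |f x| = |g x + (f x - g x)| := by ring_nf
      _ ≤ |g x| + |f x - g x| := abs_add_le _ _
      _ ≤ |g x| + ε := by linarith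
  have happG : ∀ x ∈ Set.Ioc s t, |g x| ≤ |f x| + ε := by
    intro x hx
    have := happIoc x hx
    have h' : |g x - f x| < ε := by rw [abs_sub_comm]; exact this
    calc |g x| = |f x + (g x - f x)| := by ring_nf
      _ ≤ |f x| + |g x - f x| := abs_add_le _ _
      _ ≤ |f x| + ε := by linarith
  set E := ENNReal.ofReal ε with hE
  have h1E : (1 : ℝ≥0∞) + E = ENNReal.ofReal (1 + ε) := by
    rw [hE, ENNReal.ofReal_add zero_le_one hε.le, ENNReal.ofReal_one]
  set W := fun t : ℝ => (Jl f 0 t).toReal with hWdef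
  have hW0 : 0 ≤ W t := ENNReal.toReal_nonneg
  have hofW : Jl f 0 t = ENNReal.ofReal (W t) := (ENNReal.ofReal_toReal (hloc t)).symm
  have hofB : Jl g 0 T = ENNReal.ofReal B' := by
    rw [hB'def]; exact (ENNReal.ofReal_toReal hBtop).symm
  have hcast : ∀ k : ℕ, ((k : ℕ) : ℝ≥0∞) = ENNReal.ofReal ((k : ℕ) : ℝ) := by
    intro k; rw [ENNReal.ofReal_natCast]
  have hB2 : ENNReal.ofReal (ε + ε ^ 2) * ENNReal.ofReal (t - s)
      ≤ ENNReal.ofReal ((ε + ε ^ 2) * t) := by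
    rw [← ENNReal.ofReal_mul (by positivity)]
    exact ENNReal.ofReal_le_ofReal (by nlinarith)
  -- UPPER BOUND
  have hUpper : W t ≤ C + (1 + ε) * (((n : ℝ) + 1) * B') + (ε + ε ^ 2) * t := by
    apply ENNReal.toReal_le_of_le_ofReal
    · have : 0 ≤ (1 + ε) * (((n : ℝ) + 1) * B') := by
        apply mul_nonneg (by linarith)
        apply mul_nonneg (by positivity) hB'0
      nlinarith [mul_nonneg (show (0:ℝ) ≤ ε + ε ^ 2 by positivity) htpos.le]
    have hg1 : Jl g s t ≤ ((n + 1 : ℕ) : ℝ≥0∞) * Jl g 0 T := by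
      rw [← Jl_multiple hper hT (n + 1)]
      apply Jl_mono g hs0
      push_cast
      exact le_of_lt hn2
    have hA : (1 + E) * (((n + 1 : ℕ) : ℝ≥0∞) * Jl g 0 T)
        = ENNReal.ofReal ((1 + ε) * (((n : ℝ) + 1) * B')) := by
      rw [h1E, hcast (n + 1), hofB, ← ENNReal.ofReal_mul (by positivity),
        ← ENNReal.ofReal_mul (by positivity)]
      push_cast
      ring_nf
    have h2 : Jl f s t ≤ ENNReal.ofReal ((1 + ε) * (((n : ℝ) + 1) * B'))
        + ENNReal.ofReal ((ε + ε ^ 2) * t) := by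
      calc Jl f s t
          ≤ (1 + E) * Jl g s t + ENNReal.ofReal (ε + ε ^ 2) * ENNReal.ofReal (t - s) :=
            Jl_approx hε happF
        _ ≤ (1 + E) * (((n + 1 : ℕ) : ℝ≥0∞) * Jl g 0 T)
            + ENNReal.ofReal ((ε + ε ^ 2) * t) := by gcongr
        _ = _ := by rw [hA]
    calc Jl f 0 t = Jl f 0 s + Jl f s t := Jl_split f hs0 hst
      _ ≤ ENNReal.ofReal C + (ENNReal.ofReal ((1 + ε) * (((n : ℝ) + 1) * B'))
          + ENNReal.ofReal ((ε + ε ^ 2) * t)) := by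
          apply add_le_add _ h2
          rw [hC]
          exact le_of_eq (ENNReal.ofReal_toReal (hloc s)).symm
      _ = ENNReal.ofReal (C + (1 + ε) * (((n : ℝ) + 1) * B') + (ε + ε ^ 2) * t) := by
          rw [ENNReal.ofReal_add (by positivity) (by positivity),
            ENNReal.ofReal_add hC0 (by positivity), add_assoc]
  -- LOWER BOUND
  have hmncast : s ≤ (n : ℝ) * T := by
    rw [hs]
    have : (m : ℝ) ≤ (n : ℝ) := by exact_mod_cast Nat.le_of_succ_le hmn
    nlinarith
  have hfin_n : Jl g 0 ((n : ℝ) * T) ≠ ⊤ := by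
    rw [Jl_multiple hper hT n]
    exact ENNReal.mul_ne_top (ENNReal.natCast_ne_top n) hBtop
  have hsplitg : Jl g 0 ((n : ℝ) * T) = Jl g 0 s + Jl g s ((n : ℝ) * T) :=
    Jl_split g hs0 hmncast
  have hfin_s : Jl g 0 s ≠ ⊤ := by
    intro hcon
    rw [hcon] at hsplitg
    simp at hsplitg
    exact hfin_n hsplitg
  have hfin_G : Jl g s ((n : ℝ) * T) ≠ ⊤ := by
    intro hcon
    rw [hcon] at hsplitg
    simp at hsplitg
    exact hfin_n hsplitg
  set G := (Jl g s ((n : ℝ) * T)).toReal with hGdef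
  have hG0 : 0 ≤ G := ENNReal.toReal_nonneg
  have hGeq : (n : ℝ) * B' = (m : ℝ) * B' + G := by
    have h1 : (Jl g 0 ((n : ℝ) * T)).toReal = (n : ℝ) * B' := by
      rw [Jl_multiple hper hT n, ENNReal.toReal_mul, ENNReal.toReal_natCast, hB'def]
    have h2 : (Jl g 0 s).toReal = (m : ℝ) * B' := by
      rw [hs, Jl_multiple hper hT m, ENNReal.toReal_mul, ENNReal.toReal_natCast, hB'def]
    rw [← h1, hsplitg, ENNReal.toReal_add hfin_s hfin_G, h2, hGdef]
  have hLower : G ≤ (1 + ε) * W t + (ε + ε ^ 2) * t := by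
    rw [hGdef]
    apply ENNReal.toReal_le_of_le_ofReal
    · nlinarith [mul_nonneg (show (0:ℝ) ≤ ε + ε ^ 2 by positivity) htpos.le,
        mul_nonneg (show (0:ℝ) ≤ 1 + ε by linarith) hW0]
    calc Jl g s ((n : ℝ) * T) ≤ Jl g s t := Jl_mono g le_rfl hn1
      _ ≤ (1 + E) * Jl f s t + ENNReal.ofReal (ε + ε ^ 2) * ENNReal.ofReal (t - s) :=
          Jl_approx hε happG
      _ ≤ (1 + E) * Jl f 0 t + ENNReal.ofReal ((ε + ε ^ 2) * t) := by
          gcongr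
          exact Jl_mono f hs0 le_rfl
      _ = ENNReal.ofReal ((1 + ε) * W t + (ε + ε ^ 2) * t) := by
          rw [hofW, h1E, ← ENNReal.ofReal_mul (by positivity),
            ← ENNReal.ofReal_add (by positivity) (by positivity)]
  clear_value B' β κ ε m s C n E W G
  -- final real estimate
  have hmain : |W t / t - B' / T| ≤ κ * ε := by
    have hεnR : (m : ℝ) < ε * (n : ℝ) := by linarith
    have hmTl : (m : ℝ) * T ≤ ε * t := by
      have h1 : (m : ℝ) * T < ε * (n : ℝ) * T := by
        exact mul_lt_mul_of_pos_right hεnR hT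
      have h2 : ε * ((n : ℝ) * T) ≤ ε * t := mul_le_mul_of_nonneg_left hn1 hε.le
      have h2' : ε * (n : ℝ) * T ≤ ε * t := by rw [mul_assoc]; exact h2
      linarith
    have hnTl : t - ε * t ≤ (n : ℝ) * T := by linarith
    rw [hB'β] at hGeq hUpper
    rw [← hβdef, abs_le]
    constructor
    · have key := key_lower hT htpos hε hε1 hβ0 hW0 hG0 hGeq hLower hnTl hmTl
      rw [← hκdef] at key
      have h5 := (div_le_div_iff_of_pos_right htpos).mpr key
      rw [mul_div_assoc, div_self htpos.ne', mul_one] at h5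
      linarith
    · have h4 : ((n : ℝ) + 1) * T ≤ t + ε * t := by linarith
      have key := key_upper hT htpos hε hε1 hβ0 hW0 hUpper hCε h4 (Nat.cast_nonneg n)
      rw [← hκdef] at key
      have h5 := (div_le_div_iff_of_pos_right htpos).mpr key
      rw [mul_div_assoc, div_self htpos.ne', mul_one] at h5
      linarith
  rw [Real.dist_eq]
  have hWt : (Jl f 0 t).toReal = W t := by rw [hWdef]
  rw [hWt, hβdef]
  exact lt_of_le_of_lt hmain hεκ

/-- **Lemma 1 (limit form)**: for a causal, period-preserving operator `R` with finite
incremental gain `Γ`, and `T`-periodic inputs `u₁ ≠ u₂` whose outputs converge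
asymptotically to the `T`-periodic signals `ỹ₁, ỹ₂`,
`lim_{t→∞} ‖P_t(Ru₁ − Ru₂)‖/‖P_t(u₁ − u₂)‖ = ‖ỹ₁ − ỹ₂‖_RMS / ‖u₁ − u₂‖_RMS`. -/
theorem incremental_gain_rms_gain_relation
    (R : (ℝ → ℝ) → (ℝ → ℝ)) (Γ : ℝ) (T : ℝ) (hT : 0 < T) (hΓ0 : 0 ≤ Γ)
    (hcausal : ∀ (t : ℝ) (u : ℝ → ℝ), trunc t (R u) = trunc t (R (trunc t u)))
    (hΓ : ∀ u₁ u₂ : ℝ → ℝ, MemLp u₁ 2 timeMeasure → MemLp u₂ 2 timeMeasure →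
      eLpNorm (R u₁ - R u₂) 2 timeMeasure
        ≤ ENNReal.ofReal Γ * eLpNorm (u₁ - u₂) 2 timeMeasure)
    (u₁ u₂ ytilde₁ ytilde₂ : ℝ → ℝ)
    (hu₁per : ∀ t, 0 ≤ t → u₁ (t + T) = u₁ t)
    (hu₂per : ∀ t, 0 ≤ t → u₂ (t + T) = u₂ t)
    (hy₁per : ∀ t, 0 ≤ t → ytilde₁ (t + T) = ytilde₁ t)
    (hy₂per : ∀ t, 0 ≤ t → ytilde₂ (t + T) = ytilde₂ t)
    (hmem₁ : ∀ t : ℝ, MemLp (trunc t u₁) 2 timeMeasure)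
    (hmem₂ : ∀ t : ℝ, MemLp (trunc t u₂) 2 timeMeasure)
    (hconv₁ : ∀ ε > (0:ℝ), ∃ t₀ : ℝ, ∀ τ ≥ t₀, |R u₁ τ - ytilde₁ τ| < ε)
    (hconv₂ : ∀ ε > (0:ℝ), ∃ t₀ : ℝ, ∀ τ ≥ t₀, |R u₂ τ - ytilde₂ τ| < ε)
    (hne : rmsNorm T (u₁ - u₂) ≠ 0) :
    Tendsto (fun t : ℝ => truncNorm t (R u₁ - R u₂) / truncNorm t (u₁ - u₂)) atTop
      (nhds (rmsNorm T (ytilde₁ - ytilde₂) / rmsNorm T (u₁ - u₂))) := by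
  have hdper : ∀ t, 0 ≤ t → (u₁ - u₂) (t + T) = (u₁ - u₂) t := fun t ht => by
    simp only [Pi.sub_apply, hu₁per t ht, hu₂per t ht]
  have hyper : ∀ t, 0 ≤ t → (ytilde₁ - ytilde₂) (t + T) = (ytilde₁ - ytilde₂) t := fun t ht => by
    simp only [Pi.sub_apply, hy₁per t ht, hy₂per t ht]
  -- facts about A = Jl (u₁ - u₂) 0 T
  have hA'pos : 0 < (Jl (u₁ - u₂) 0 T).toReal := by
    rcases lt_or_eq_of_le (ENNReal.toReal_nonneg (a := Jl (u₁ - u₂) 0 T)) with h | h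
    · exact h
    · exfalso
      apply hne
      rw [rmsNorm_eq, ← h, Real.sqrt_zero, zero_div]
  have hAtop : Jl (u₁ - u₂) 0 T ≠ ⊤ := by
    intro h
    rw [h] at hA'pos
    simp at hA'pos
  -- local finiteness for u₁ - u₂
  have hlocd : ∀ t, Jl (u₁ - u₂) 0 t ≠ ⊤ := by
    intro t
    rcases le_or_gt t 0 with h | h
    · rw [Jl_neg _ h]; exact ENNReal.zero_ne_top
    · have hn : t ≤ (⌈t / T⌉₊ : ℝ) * T := by
        rw [← div_le_iff₀ hT]; exact Nat.le_ceil _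
      refine ne_top_of_le_ne_top ?_ (Jl_mono _ le_rfl hn)
      rw [Jl_multiple hdper hT]
      exact ENNReal.mul_ne_top (ENNReal.natCast_ne_top _) hAtop
  -- local finiteness for R u₁ - R u₂ via causality and finite gain
  have hlocw : ∀ t, Jl (R u₁ - R u₂) 0 t ≠ ⊤ := by
    intro t
    rcases le_or_gt t 0 with h | h
    · rw [Jl_neg _ h]; exact ENNReal.zero_ne_top
    · have ht0 : (0:ℝ) ≤ t := h.le
      rw [← trunc_lintegral (R u₁ - R u₂) ht0]
      have hpt : ∀ x, (‖trunc t (R u₁ - R u₂) x‖₊ : ℝ≥0∞) ^ 2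
          ≤ (‖(R (trunc t u₁) - R (trunc t u₂)) x‖₊ : ℝ≥0∞) ^ 2 := by
        intro x
        by_cases hx : x ≤ t
        · have c1 : trunc t (R u₁) x = trunc t (R (trunc t u₁)) x := by rw [hcausal t u₁]
          have c2 : trunc t (R u₂) x = trunc t (R (trunc t u₂)) x := by rw [hcausal t u₂]
          simp only [trunc, if_pos hx] at c1 c2
          have h1 : trunc t (R u₁ - R u₂) x = (R (trunc t u₁) - R (trunc t u₂)) x := by
            simp only [trunc, Pi.sub_apply, if_pos hx, c1, c2]
          rw [h1]
        · have h1 : trunc t (R u₁ - R u₂) x = 0 := by simp [trunc, hx]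
          rw [h1]
          simp
      have hle := lintegral_mono (μ := timeMeasure) hpt
      refine ne_top_of_le_ne_top ?_ hle
      rw [sq_eLpNorm]
      have hg := hΓ (trunc t u₁) (trunc t u₂) (hmem₁ t) (hmem₂ t)
      have hfin : eLpNorm (trunc t u₁ - trunc t u₂) 2 timeMeasure ≠ ⊤ :=
        ((hmem₁ t).sub (hmem₂ t)).eLpNorm_ne_top
      exact ENNReal.pow_ne_top
        (ne_top_of_le_ne_top (ENNReal.mul_ne_top ENNReal.ofReal_ne_top hfin) hg)
  -- rate lemma for the input difference (approximated by itself)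
  obtain ⟨-, hTendD⟩ := rate hT (u₁ - u₂) (u₁ - u₂) hdper
    (fun ε hε => ⟨0, le_rfl, fun τ _ => by simpa using hε⟩) hlocd
  -- approximation of the output difference by the periodic signal
  have happw : ∀ ε > (0:ℝ), ∃ t₀ : ℝ, 0 ≤ t₀ ∧
      ∀ τ ≥ t₀, |(R u₁ - R u₂) τ - (ytilde₁ - ytilde₂) τ| < ε := by
    intro ε hε
    obtain ⟨t₁, h1⟩ := hconv₁ (ε / 2) (by linarith)
    obtain ⟨t₂, h2⟩ := hconv₂ (ε / 2) (by linarith)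
    refine ⟨max 0 (max t₁ t₂), le_max_left _ _, fun τ hτ => ?_⟩
    have e1 := h1 τ (le_trans (le_trans (le_max_left _ _) (le_max_right _ _)) hτ)
    have e2 := h2 τ (le_trans (le_trans (le_max_right _ _) (le_max_right _ _)) hτ)
    simp only [Pi.sub_apply]
    calc |R u₁ τ - R u₂ τ - (ytilde₁ τ - ytilde₂ τ)|
        = |(R u₁ τ - ytilde₁ τ) - (R u₂ τ - ytilde₂ τ)| := by ring_nf
      _ ≤ |R u₁ τ - ytilde₁ τ| + |R u₂ τ - ytilde₂ τ| := abs_sub _ _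
      _ < ε := by linarith
  obtain ⟨hBtop, hTendW⟩ := rate hT (R u₁ - R u₂) (ytilde₁ - ytilde₂) hyper happw hlocw
  -- assemble the limit
  have hB'0 : 0 ≤ (Jl (ytilde₁ - ytilde₂) 0 T).toReal := ENNReal.toReal_nonneg
  have hAdiv : 0 < (Jl (u₁ - u₂) 0 T).toReal / T := by positivity
  have hsA : Real.sqrt ((Jl (u₁ - u₂) 0 T).toReal / T) ≠ 0 :=
    ne_of_gt (Real.sqrt_pos.mpr hAdiv)
  have hlim := Tendsto.div
    ((Real.continuous_sqrt.tendsto _).comp hTendW)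
    ((Real.continuous_sqrt.tendsto _).comp hTendD) hsA
  have hval : Real.sqrt ((Jl (ytilde₁ - ytilde₂) 0 T).toReal / T)
      / Real.sqrt ((Jl (u₁ - u₂) 0 T).toReal / T)
      = rmsNorm T (ytilde₁ - ytilde₂) / rmsNorm T (u₁ - u₂) := by
    rw [rmsNorm_eq, rmsNorm_eq, Real.sqrt_div hB'0 T, Real.sqrt_div hA'pos.le T]
  rw [hval] at hlim
  apply Tendsto.congr' _ hlim
  filter_upwards [eventually_ge_atTop (max T 1)] with t ht
  have htT : T ≤ t := le_trans (le_max_left _ _) ht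
  have ht1 : (1:ℝ) ≤ t := le_trans (le_max_right _ _) ht
  have ht0 : 0 < t := by linarith
  have hD : 0 < (Jl (u₁ - u₂) 0 t).toReal :=
    lt_of_lt_of_le hA'pos (ENNReal.toReal_mono (hlocd t) (Jl_mono _ le_rfl htT))
  have hsqt : Real.sqrt t ≠ 0 := ne_of_gt (Real.sqrt_pos.mpr ht0)
  have hsD : Real.sqrt (Jl (u₁ - u₂) 0 t).toReal ≠ 0 :=
    ne_of_gt (Real.sqrt_pos.mpr hD)
  show Real.sqrt ((Jl (R u₁ - R u₂) 0 t).toReal / t) / Real.sqrt ((Jl (u₁ - u₂) 0 t).toReal / t) = _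
  rw [truncNorm_eq _ ht0.le, truncNorm_eq _ ht0.le,
    Real.sqrt_div ENNReal.toReal_nonneg t, Real.sqrt_div ENNReal.toReal_nonneg t]
  field_simp
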